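/- (Logarithmic Grönwall estimate.) Let T > 0, K ≥ 0 and 0 < c ≤ e^{−2}. Let u : [0, T] → [0, e^{−2}] be continuous and satisfy u(t) ≤ c + K·∫₀^t (−u(s)·ln u(s)) ds for every t ∈ [0, T]. Then u(t) ≤ c^{exp(−K t)} for every t ∈ [0, T]. -/

import Mathlib

open intervalIntegral

private lemma neg_mul_log_mono :
    MonotoneOn (fun r : ℝ => -(r * Real.log r)) (Set.Icc 0 (Real.exp (-1))) := by
  apply monotoneOn_of_deriv_nonneg (convex_Icc _ _)
  · exact (Real.continuous_mul_log.neg).continuousOn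
  · rw [interior_Icc]
    intro x hx
    exact ((Real.hasDerivAt_mul_log (ne_of_gt hx.1)).neg).differentiableAt.differentiableWithinAt
  · rw [interior_Icc]
    intro x hx
    rw [deriv.fun_neg, (Real.hasDerivAt_mul_log (ne_of_gt hx.1)).deriv]
    have : Real.log x < -1 := by
      have := Real.log_lt_log hx.1 hx.2
      rwa [Real.log_exp] at this
    linarith

/-- Logarithmic Grönwall estimate: if `u : [0,T] → [0, e⁻²]` is continuous with
`u(t) ≤ c + K ∫₀ᵗ (-u(s) ln u(s)) ds` for `0 < c ≤ e⁻²`, then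
`u(t) ≤ c ^ exp(-K t)`. -/
theorem log_gronwall
    (T K c : ℝ) (hT : 0 < T) (hK : 0 ≤ K) (hc0 : 0 < c) (hc : c ≤ Real.exp (-2))
    (u : ℝ → ℝ) (hu_cont : ContinuousOn u (Set.Icc 0 T))
    (hu_mem : ∀ t ∈ Set.Icc (0 : ℝ) T, u t ∈ Set.Icc (0 : ℝ) (Real.exp (-2)))
    (h_ineq : ∀ t ∈ Set.Icc (0 : ℝ) T,
        u t ≤ c + K * ∫ s in (0 : ℝ)..t, -(u s * Real.log (u s))) :
    ∀ t ∈ Set.Icc (0 : ℝ) T, u t ≤ c ^ Real.exp (-(K * t)) := by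
  have he21 : Real.exp (-2) < Real.exp (-1) := Real.exp_lt_exp.2 (by norm_num)
  have hc1 : c < 1 := lt_of_le_of_lt hc (by
    calc Real.exp (-2) < Real.exp 0 := Real.exp_lt_exp.2 (by norm_num)
    _ = 1 := Real.exp_zero)
  -- the clamped extension of `u`
  set U : ℝ → ℝ := fun s => u (max 0 (min s T)) with hU_def
  have hclamp_mem : ∀ s : ℝ, max 0 (min s T) ∈ Set.Icc (0 : ℝ) T := by
    intro s
    constructor
    · exact le_max_left _ _
    · exact max_le hT.le (min_le_right _ _)
  have hU_cont : Continuous U := by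
    apply hu_cont.comp_continuous
    · exact continuous_const.max (continuous_id.min continuous_const)
    · exact hclamp_mem
  have hU_eq : ∀ s ∈ Set.Icc (0 : ℝ) T, U s = u s := by
    intro s hs
    simp only [hU_def]
    rw [min_eq_left hs.2, max_eq_right hs.1]
  have hU_mem : ∀ s : ℝ, U s ∈ Set.Icc (0 : ℝ) (Real.exp (-2)) :=
    fun s => hu_mem _ (hclamp_mem s)
  -- the nonnegative continuous integrand
  set f : ℝ → ℝ := fun s => -(U s * Real.log (U s)) with hf_def
  have hf_cont : Continuous f := (Real.continuous_mul_log.comp hU_cont).neg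
  have hf_nonneg : ∀ s : ℝ, 0 ≤ f s := by
    intro s
    have h1 := (hU_mem s).1
    have h2 : U s ≤ 1 := (hU_mem s).2.trans (le_of_lt (lt_trans he21 (by
      calc Real.exp (-1) < Real.exp 0 := Real.exp_lt_exp.2 (by norm_num)
      _ = 1 := Real.exp_zero)))
    simpa [hf_def] using neg_nonneg.2 (Real.mul_log_nonpos h1 h2)
  -- the majorant `v`
  set v : ℝ → ℝ := fun t => c + K * ∫ s in (0 : ℝ)..t, f s with hv_def
  have hv_deriv : ∀ t : ℝ, HasDerivAt v (K * f t) t := by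
    intro t
    have := (hf_cont.integral_hasStrictDerivAt 0 t).hasDerivAt
    simpa [hv_def] using ((this.const_mul K).const_add c)
  have hv_cont : Continuous v := by
    apply continuous_iff_continuousAt.2
    intro t
    exact (hv_deriv t).continuousAt
  have hv_mono : Monotone v := by
    intro s t hst
    have hint : ∀ a b : ℝ, IntervalIntegrable f MeasureTheory.volume a b :=
      fun a b => hf_cont.intervalIntegrable a b
    have hsplit : (∫ x in (0:ℝ)..s, f x) + (∫ x in s..t, f x) = ∫ x in (0:ℝ)..t, f x :=
      intervalIntegral.integral_add_adjacent_intervals (hint 0 s) (hint s t)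
    have hpos : 0 ≤ ∫ x in s..t, f x :=
      intervalIntegral.integral_nonneg hst (fun x _ => hf_nonneg x)
    simp only [hv_def]
    nlinarith [hpos, hsplit]
  have hv0 : v 0 = c := by simp [hv_def]
  have hv_pos : ∀ t : ℝ, 0 ≤ t → c ≤ v t := by
    intro t ht
    calc c = v 0 := hv0.symm
    _ ≤ v t := hv_mono ht
  -- `u ≤ v` on `[0,T]`
  have hu_le_v : ∀ t ∈ Set.Icc (0 : ℝ) T, u t ≤ v t := by
    intro t ht
    have hcongr : (∫ s in (0:ℝ)..t, -(u s * Real.log (u s))) = ∫ s in (0:ℝ)..t, f s := by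
      apply intervalIntegral.integral_congr
      intro s hs
      have hs' : s ∈ Set.Icc (0 : ℝ) T := by
        rcases hs with ⟨h1, h2⟩
        rw [min_eq_left ht.1] at h1
        rw [max_eq_right ht.1] at h2
        exact ⟨h1, h2.trans ht.2⟩
      simp [hf_def, hU_eq s hs']
    have := h_ineq t ht
    rw [hcongr] at this
    simpa [hv_def] using this
  -- core Grönwall lemma on an interval where `v ≤ e⁻¹`
  have core : ∀ a ∈ Set.Icc (0 : ℝ) T, (∀ s ∈ Set.Icc (0 : ℝ) a, v s ≤ Real.exp (-1)) →
      v a ≤ c ^ Real.exp (-(K * a)) := by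
    intro a ha hbound
    set g : ℝ → ℝ := fun t => Real.exp (K * t) * Real.log (v t) with hg_def
    have hg_anti : AntitoneOn g (Set.Icc 0 a) := by
      apply antitoneOn_of_deriv_nonpos (convex_Icc _ _)
      · apply ContinuousOn.mul (Continuous.continuousOn (by fun_prop))
        apply ContinuousOn.log hv_cont.continuousOn
        intro t ht
        exact ne_of_gt (lt_of_lt_of_le hc0 (hv_pos t ht.1))
      · rw [interior_Icc]
        intro t ht
        have hvt : v t ≠ 0 := ne_of_gt (lt_of_lt_of_le hc0 (hv_pos t ht.1.le))
        exact (((Real.hasDerivAt_exp _).comp t ((hasDerivAt_id t).const_mul K)).mul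
          ((hv_deriv t).log hvt)).differentiableAt.differentiableWithinAt
      · rw [interior_Icc]
        intro t ht
        have ht' : t ∈ Set.Icc (0 : ℝ) T := ⟨ht.1.le, ht.2.le.trans ha.2⟩
        have hvt0 : 0 < v t := lt_of_lt_of_le hc0 (hv_pos t ht.1.le)
        have hd : HasDerivAt g
            (Real.exp (K * t) * K * Real.log (v t) + Real.exp (K * t) * (K * f t / v t)) t := by
          have h1 : HasDerivAt (fun t => Real.exp (K * t)) (Real.exp (K * t) * K) t := by
            convert ((hasDerivAt_id' t).const_mul K).exp using 1; ring
          have h2 : HasDerivAt (fun t => Real.log (v t)) (K * f t / v t) t :=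
            (hv_deriv t).log (ne_of_gt hvt0)
          exact h1.mul h2
        rw [hd.deriv]
        -- key inequality: f t ≤ -(v t * log (v t))
        have hkey : f t ≤ -(v t * Real.log (v t)) := by
          have hut : u t ≤ v t := hu_le_v t ht'
          have hvt1 : v t ≤ Real.exp (-1) := hbound t ⟨ht.1.le, ht.2.le⟩
          have hU : U t = u t := hU_eq t ht'
          have hx : u t ∈ Set.Icc (0 : ℝ) (Real.exp (-1)) :=
            ⟨(hu_mem t ht').1, (hu_mem t ht').2.trans he21.le⟩
          have hy : v t ∈ Set.Icc (0 : ℝ) (Real.exp (-1)) := ⟨hvt0.le, hvt1⟩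
          have := neg_mul_log_mono hx hy hut
          simpa [hf_def, hU] using this
        have hexp : 0 < Real.exp (K * t) := Real.exp_pos _
        have h3 : K * f t / v t ≤ -(K * Real.log (v t)) := by
          rw [div_le_iff₀ hvt0]
          nlinarith [mul_le_mul_of_nonneg_left hkey hK]
        nlinarith [mul_le_mul_of_nonneg_left h3 hexp.le]
    have hga : g a ≤ g 0 := hg_anti (Set.left_mem_Icc.2 ha.1) (Set.right_mem_Icc.2 ha.1) ha.1
    have hg0 : g 0 = Real.log c := by simp [hg_def, hv0]
    rw [hg0] at hga
    have hexp : 0 < Real.exp (K * a) := Real.exp_pos _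
    have hlog : Real.log (v a) ≤ Real.exp (-(K * a)) * Real.log c := by
      have h := mul_le_mul_of_nonneg_left hga (Real.exp_nonneg (-(K * a)))
      rwa [← mul_assoc, ← Real.exp_add, neg_add_cancel, Real.exp_zero, one_mul] at h
    have hva : 0 < v a := lt_of_lt_of_le hc0 (hv_pos a ha.1)
    calc v a = Real.exp (Real.log (v a)) := (Real.exp_log hva).symm
    _ ≤ Real.exp (Real.exp (-(K * a)) * Real.log c) := Real.exp_le_exp.2 hlog
    _ = c ^ Real.exp (-(K * a)) := by
        rw [Real.rpow_def_of_pos hc0, mul_comm]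
  -- main argument
  intro t₀ ht₀
  by_cases hw : Real.exp (-2) ≤ c ^ Real.exp (-(K * t₀))
  · exact (hu_mem t₀ ht₀).2.trans hw
  push_neg at hw
  have hmain : v t₀ ≤ c ^ Real.exp (-(K * t₀)) := by
    by_cases hv1 : v t₀ ≤ Real.exp (-1)
    · exact core t₀ ht₀ (fun s hs => (hv_mono hs.2).trans hv1)
    · push_neg at hv1
      exfalso
      have hivt : Real.exp (-1) ∈ Set.Icc (v 0) (v t₀) := ⟨hv0.le.trans (hc.trans he21.le), hv1.le⟩
      obtain ⟨τ, hτ_mem, hτ_eq⟩ := intermediate_value_Icc ht₀.1 hv_cont.continuousOn hivt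
      have hτT : τ ∈ Set.Icc (0 : ℝ) T := ⟨hτ_mem.1, hτ_mem.2.trans ht₀.2⟩
      have hbd : ∀ s ∈ Set.Icc (0 : ℝ) τ, v s ≤ Real.exp (-1) := by
        intro s hs
        calc v s ≤ v τ := hv_mono hs.2
        _ = Real.exp (-1) := hτ_eq
      have h1 : v τ ≤ c ^ Real.exp (-(K * τ)) := core τ hτT hbd
      have h2 : c ^ Real.exp (-(K * τ)) ≤ c ^ Real.exp (-(K * t₀)) := by
        apply Real.rpow_le_rpow_of_exponent_ge hc0 hc1.le
        apply Real.exp_le_exp.2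
        have : K * τ ≤ K * t₀ := mul_le_mul_of_nonneg_left hτ_mem.2 hK
        linarith
      rw [hτ_eq] at h1
      have := h1.trans (h2.trans hw.le)
      linarith [he21]
  exact (hu_le_v t₀ ht₀).trans hmain
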